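/- Let X and Y be locally compact Hausdorff spaces and let T : C₀(X)⁺ → C₀(Y)⁺ be a bijection such that for all f, g ∈ C₀(X)⁺ one has ‖T(f+g)‖ = ‖T(f)+T(g)‖ and ‖T(f·g)‖ = ‖T(f)·T(g)‖. Define T̃ : C₀(X) → C₀(Y) by T̃(f) = T(f₊) − T(f₋). Then ‖T̃(f)‖ ≤ ‖f‖ for every f ∈ C₀(X). -/

import Mathlib

open scoped ZeroAtInfty
open Filter ZeroAtInftyContinuousMap

/-- The positive part `f₊ = max (f, 0)` of a real-valued continuous function
vanishing at infinity. -/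
noncomputable def posPart {X : Type*} [TopologicalSpace X] (f : C₀(X, ℝ)) : C₀(X, ℝ) :=
  ⟨⟨fun x => max (f x) 0, (map_continuous f).max continuous_const⟩, by
    simpa using (zero_at_infty f).max
      (tendsto_const_nhds : Tendsto (fun _ : X => (0 : ℝ)) (cocompact X) (nhds 0))⟩

/-- The negative part `f₋ = max (-f, 0)`. -/
noncomputable def negPart {X : Type*} [TopologicalSpace X] (f : C₀(X, ℝ)) : C₀(X, ℝ) :=
  posPart (-f)

/-- The extension `T̃(f) = T(f₊) - T(f₋)` of a map between positive cones. -/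
noncomputable def tildeT {X Y : Type*} [TopologicalSpace X] [TopologicalSpace Y]
    (T : C₀(X, ℝ) → C₀(Y, ℝ)) (f : C₀(X, ℝ)) : C₀(Y, ℝ) :=
  T (posPart f) - T (negPart f)

/-- Norm bound from a pointwise bound. -/
lemma C0norm_le {Y : Type*} [TopologicalSpace Y] (f : C₀(Y, ℝ)) {C : ℝ} (hC : 0 ≤ C)
    (h : ∀ y, |f y| ≤ C) : ‖f‖ ≤ C := by
  rw [← norm_toBCF_eq_norm]
  exact (BoundedContinuousFunction.norm_le hC).mpr h

/-- Pointwise bound from norm. -/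
lemma C0abs_le_norm {Y : Type*} [TopologicalSpace Y] (f : C₀(Y, ℝ)) (y : Y) :
    |f y| ≤ ‖f‖ := by
  rw [← norm_toBCF_eq_norm]
  exact f.toBCF.norm_coe_le_norm y

/-- `‖f * f‖ = ‖f‖ ^ 2`. -/
lemma C0norm_mul_self {Y : Type*} [TopologicalSpace Y] (f : C₀(Y, ℝ)) :
    ‖f * f‖ = ‖f‖ ^ 2 := by
  apply le_antisymm
  · calc ‖f * f‖ ≤ ‖f‖ * ‖f‖ := norm_mul_le f f
    _ = ‖f‖ ^ 2 := (sq ‖f‖).symm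
  · have h : ∀ y, |f y| ≤ Real.sqrt ‖f * f‖ := by
      intro y
      have h1 : |f y| ^ 2 = |(f * f) y| := by
        simp [sq, abs_mul]
      have h2 : |(f * f) y| ≤ ‖f * f‖ := C0abs_le_norm _ y
      have := Real.sqrt_le_sqrt (h1 ▸ h2 : |f y| ^ 2 ≤ ‖f * f‖)
      rwa [Real.sqrt_sq (abs_nonneg _)] at this
    have := C0norm_le f (Real.sqrt_nonneg _) h
    calc ‖f‖ ^ 2 ≤ Real.sqrt ‖f * f‖ ^ 2 := by
          apply pow_le_pow_left₀ (norm_nonneg f) this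
    _ = ‖f * f‖ := Real.sq_sqrt (norm_nonneg _)

/-- For nonnegative functions, `‖a‖ ≤ ‖a + b‖`. -/
lemma C0norm_le_norm_add {Y : Type*} [TopologicalSpace Y] (a b : C₀(Y, ℝ))
    (ha : ∀ y, 0 ≤ a y) (hb : ∀ y, 0 ≤ b y) : ‖a‖ ≤ ‖a + b‖ := by
  apply C0norm_le a (norm_nonneg _)
  intro y
  have : a y ≤ (a + b) y := by simp [hb y]
  calc |a y| = a y := abs_of_nonneg (ha y)
  _ ≤ (a + b) y := this
  _ ≤ |(a + b) y| := le_abs_self _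
  _ ≤ ‖a + b‖ := C0abs_le_norm _ y

/-- For nonnegative functions, `‖a - b‖ ≤ max ‖a‖ ‖b‖`. -/
lemma C0norm_sub_le_max {Y : Type*} [TopologicalSpace Y] (a b : C₀(Y, ℝ))
    (ha : ∀ y, 0 ≤ a y) (hb : ∀ y, 0 ≤ b y) : ‖a - b‖ ≤ max ‖a‖ ‖b‖ := by
  apply C0norm_le _ (le_max_of_le_left (norm_nonneg a))
  intro y
  have h1 : a y ≤ ‖a‖ := (abs_of_nonneg (ha y)) ▸ C0abs_le_norm a y
  have h2 : b y ≤ ‖b‖ := (abs_of_nonneg (hb y)) ▸ C0abs_le_norm b y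
  have : |(a - b) y| = |a y - b y| := by simp
  rw [this, abs_sub_le_iff]
  constructor
  · calc a y - b y ≤ a y := by linarith [hb y]
    _ ≤ max ‖a‖ ‖b‖ := le_max_of_le_left h1
  · calc b y - a y ≤ b y := by linarith [ha y]
    _ ≤ max ‖a‖ ‖b‖ := le_max_of_le_right h2

/-- For `s ≥ 1`, there is `k` with `s ≤ 2 ^ k ≤ 2 * s`. -/
lemma exists_pow_two_between {s : ℝ} (hs : 1 ≤ s) :
    ∃ k : ℕ, s ≤ 2 ^ k ∧ (2 : ℝ) ^ k ≤ 2 * s := by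
  have hex : ∃ k : ℕ, s ≤ 2 ^ k := by
    obtain ⟨k, hk⟩ := pow_unbounded_of_one_lt s (by norm_num : (1:ℝ) < 2)
    exact ⟨k, hk.le⟩
  classical
  refine ⟨Nat.find hex, Nat.find_spec hex, ?_⟩
  rcases Nat.eq_zero_or_pos (Nat.find hex) with h0 | hpos
  · rw [h0]; norm_num; linarith
  · obtain ⟨m, hm⟩ := Nat.exists_eq_succ_of_ne_zero hpos.ne'
    have hlt : ¬ s ≤ 2 ^ m := Nat.find_min hex (by omega)
    push_neg at hlt
    rw [hm, pow_succ]
    calc (2:ℝ) ^ m * 2 ≤ s * 2 := by nlinarith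
    _ = 2 * s := by ring


/-- `‖c • f‖ = |c| * ‖f‖` for `C₀` functions. -/
lemma C0norm_smul {Y : Type*} [TopologicalSpace Y] (c : ℝ) (g : C₀(Y, ℝ)) :
    ‖c • g‖ = |c| * ‖g‖ := by
  rw [← norm_toBCF_eq_norm, ← norm_toBCF_eq_norm]
  have : (c • g).toBCF = c • g.toBCF := rfl
  rw [this, norm_smul, Real.norm_eq_abs]

/-- Iterated squaring: `sqIter n f = f ^ (2 ^ n)`. -/
noncomputable def sqIter {X : Type*} [TopologicalSpace X] : ℕ → C₀(X, ℝ) → C₀(X, ℝ)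
  | 0, f => f
  | n + 1, f => sqIter n f * sqIter n f

/-- The extension of a ring isomorphism in norm between positive cones is norm-decreasing. -/
theorem norm_tildeT_le {X Y : Type*}
    [TopologicalSpace X] [LocallyCompactSpace X] [T2Space X]
    [TopologicalSpace Y] [LocallyCompactSpace Y] [T2Space Y]
    (T : C₀(X, ℝ) → C₀(Y, ℝ))
    (hbij : Set.BijOn T {f : C₀(X, ℝ) | ∀ x, 0 ≤ f x} {g : C₀(Y, ℝ) | ∀ y, 0 ≤ g y})
    (hadd : ∀ f g : C₀(X, ℝ), (∀ x, 0 ≤ f x) → (∀ x, 0 ≤ g x) →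
      ‖T (f + g)‖ = ‖T f + T g‖)
    (hmul : ∀ f g : C₀(X, ℝ), (∀ x, 0 ≤ f x) → (∀ x, 0 ≤ g x) →
      ‖T (f * g)‖ = ‖T f * T g‖) :
    ∀ f : C₀(X, ℝ), ‖tildeT T f‖ ≤ ‖f‖ := by
  have hpos : ∀ f : C₀(X, ℝ), (∀ x, 0 ≤ f x) → ∀ y, 0 ≤ T f y :=
    fun f hf => hbij.1 hf
  -- doubling : ‖T (f + f)‖ = 2 * ‖T f‖
  have hdbl : ∀ f : C₀(X, ℝ), (∀ x, 0 ≤ f x) → ‖T (f + f)‖ = 2 * ‖T f‖ := by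
    intro f hf
    rw [hadd f f hf hf]
    have h2 : T f + T f = (2 : ℝ) • T f := (two_smul ℝ (T f)).symm
    rw [h2, C0norm_smul]
    norm_num
  -- homogeneity for powers of two: ‖T ((2^k) • f)‖ = 2^k * ‖T f‖
  have hhom : ∀ (k : ℕ) (f : C₀(X, ℝ)), (∀ x, 0 ≤ f x) →
      ‖T (((2:ℝ) ^ k) • f)‖ = 2 ^ k * ‖T f‖ := by
    intro k
    induction k with
    | zero => intro f hf; simp
    | succ n ih =>
      intro f hf
      have key : ((2:ℝ) ^ (n + 1)) • f = ((2:ℝ) ^ n) • f + ((2:ℝ) ^ n) • f := by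
        rw [← two_smul ℝ (((2:ℝ) ^ n) • f), smul_smul]
        ring_nf
      have hPf : ∀ x, 0 ≤ (((2:ℝ) ^ n) • f) x := by
        intro x
        have h1 : (((2:ℝ) ^ n) • f) x = 2 ^ n * f x := by simp
        rw [h1]
        exact mul_nonneg (by positivity) (hf x)
      rw [key, hdbl _ hPf, ih f hf, pow_succ]
      ring
  -- ‖f‖ ≤ 1 implies ‖T f‖ ≤ 1
  have hle1 : ∀ f : C₀(X, ℝ), (∀ x, 0 ≤ f x) → ‖f‖ ≤ 1 → ‖T f‖ ≤ 1 := by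
    intro f hf hn
    set h := f - f * f with hh
    have hPh : ∀ x, 0 ≤ h x := by
      intro x
      have h1 : f x ≤ 1 := le_trans (le_trans (le_abs_self _) (C0abs_le_norm f x)) hn
      have h2 : h x = f x - f x * f x := by simp [hh]
      rw [h2]; nlinarith [hf x]
    have hPff : ∀ x, 0 ≤ (f * f) x := by intro x; simp [mul_nonneg (hf x) (hf x)]
    have hsum : f * f + h = f := by simp [hh]
    have key : ‖T (f * f)‖ ≤ ‖T f‖ := by
      calc ‖T (f * f)‖ ≤ ‖T (f * f) + T h‖ :=
            C0norm_le_norm_add _ _ (hpos _ hPff) (hpos _ hPh)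
      _ = ‖T (f * f + h)‖ := (hadd _ _ hPff hPh).symm
      _ = ‖T f‖ := by rw [hsum]
    rw [hmul f f hf hf, C0norm_mul_self] at key
    nlinarith [norm_nonneg (T f)]
  -- ‖f‖ ≤ 2^k implies ‖T f‖ ≤ 2^k
  have hle2k : ∀ (k : ℕ) (f : C₀(X, ℝ)), (∀ x, 0 ≤ f x) → ‖f‖ ≤ 2 ^ k →
      ‖T f‖ ≤ 2 ^ k := by
    intro k f hf hn
    set g := ((2:ℝ) ^ k)⁻¹ • f with hg
    have hPg : ∀ x, 0 ≤ g x := by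
      intro x
      have h1 : g x = ((2:ℝ) ^ k)⁻¹ * f x := by simp [hg]
      rw [h1]
      exact mul_nonneg (by positivity) (hf x)
    have hfg : ((2:ℝ) ^ k) • g = f := by
      rw [hg, smul_smul, mul_inv_cancel₀ (by positivity), one_smul]
    have hng : ‖g‖ ≤ 1 := by
      rw [hg, C0norm_smul, abs_of_pos (by positivity)]
      rw [inv_mul_le_iff₀ (by positivity), mul_one]
      exact hn
    have h1 := hle1 g hPg hng
    calc ‖T f‖ = ‖T (((2:ℝ) ^ k) • g)‖ := by rw [hfg]
    _ = 2 ^ k * ‖T g‖ := hhom k g hPg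
    _ ≤ 2 ^ k * 1 := by
        apply mul_le_mul_of_nonneg_left h1 (by positivity)
    _ = 2 ^ k := mul_one _
  -- iterated squares
  have hsq : ∀ (n : ℕ) (f : C₀(X, ℝ)), (∀ x, 0 ≤ f x) →
      (∀ x, 0 ≤ (sqIter n f) x) ∧ ‖sqIter n f‖ = ‖f‖ ^ (2 ^ n) ∧
      ‖T (sqIter n f)‖ = ‖T f‖ ^ (2 ^ n) := by
    intro n
    induction n with
    | zero =>
      intro f hf
      exact ⟨hf, by simp [sqIter], by simp [sqIter]⟩
    | succ n ih =>
      intro f hf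
      obtain ⟨hP, hnrm, hT⟩ := ih f hf
      have hps : ∀ a : ℝ, (a ^ (2 ^ n)) ^ 2 = a ^ (2 ^ (n + 1)) := by
        intro a
        rw [← pow_mul, pow_succ]
      refine ⟨?_, ?_, ?_⟩
      · intro x
        show 0 ≤ (sqIter n f * sqIter n f) x
        have h1 : (sqIter n f * sqIter n f) x = (sqIter n f) x * (sqIter n f) x := by simp
        rw [h1]
        exact mul_nonneg (hP x) (hP x)
      · show ‖sqIter n f * sqIter n f‖ = _
        rw [C0norm_mul_self, hnrm, hps]
      · show ‖T (sqIter n f * sqIter n f)‖ = _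
        rw [hmul _ _ hP hP, C0norm_mul_self, hT, hps]
  -- main estimate for ‖f‖ ≥ 1
  have hbig : ∀ f : C₀(X, ℝ), (∀ x, 0 ≤ f x) → 1 ≤ ‖f‖ → ‖T f‖ ≤ ‖f‖ := by
    intro f hf hn
    by_contra hcon
    push_neg at hcon
    set t := ‖f‖ with ht
    set r := ‖T f‖ with hr
    have htpos : 0 < t := lt_of_lt_of_le one_pos hn
    have hr1 : 1 < r / t := (one_lt_div htpos).mpr hcon
    -- for all n, r ^ (2^n) ≤ 2 * t ^ (2^n)
    have hkey : ∀ n : ℕ, r ^ (2 ^ n) ≤ 2 * t ^ (2 ^ n) := by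
      intro n
      obtain ⟨hP, hnrm, hT⟩ := hsq n f hf
      have ht1 : (1:ℝ) ≤ t ^ (2 ^ n) := one_le_pow₀ hn
      obtain ⟨k, hk1, hk2⟩ := exists_pow_two_between ht1
      have hb : ‖sqIter n f‖ ≤ 2 ^ k := by rw [hnrm]; exact hk1
      have h1 := hle2k k _ hP hb
      rw [hT] at h1
      calc r ^ (2 ^ n) ≤ 2 ^ k := h1
      _ ≤ 2 * t ^ (2 ^ n) := hk2
    -- contradiction: (r/t)^(2^n) ≤ 2 but (r/t)^m unbounded
    obtain ⟨m, hm⟩ := pow_unbounded_of_one_lt (2:ℝ) hr1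
    have hmle : (r / t) ^ m ≤ (r / t) ^ (2 ^ m) :=
      pow_le_pow_right₀ hr1.le (Nat.lt_two_pow_self (n := m)).le
    have hfin : (r / t) ^ (2 ^ m) ≤ 2 := by
      rw [div_pow, div_le_iff₀ (by positivity)]
      linarith [hkey m]
    linarith
  -- the norm bound on the cone
  have hcone : ∀ f : C₀(X, ℝ), (∀ x, 0 ≤ f x) → ‖T f‖ ≤ ‖f‖ := by
    intro f hf
    rcases eq_or_lt_of_le (norm_nonneg f) with h0 | h0
    · -- f = 0
      have hf0 : f = 0 := norm_eq_zero.mp h0.symm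
      have h00 : ∀ x, 0 ≤ (0 : C₀(X, ℝ)) x := by intro x; simp
      have h1 : ‖T ((0:C₀(X, ℝ)) + 0)‖ = 2 * ‖T 0‖ := hdbl 0 h00
      rw [add_zero] at h1
      have hT0 : ‖T (0:C₀(X, ℝ))‖ = 0 := by linarith
      rw [hf0, hT0]
      simp
    · obtain ⟨k, hk⟩ := pow_unbounded_of_one_lt (‖f‖⁻¹) (by norm_num : (1:ℝ) < 2)
      have h1 : 1 ≤ 2 ^ k * ‖f‖ := by
        rw [← inv_mul_cancel₀ h0.ne']
        apply mul_le_mul_of_nonneg_right hk.le h0.le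
      set g := ((2:ℝ) ^ k) • f with hg
      have hPg : ∀ x, 0 ≤ g x := by
        intro x
        have h2 : g x = (2:ℝ) ^ k * f x := by simp [hg]
        rw [h2]
        exact mul_nonneg (by positivity) (hf x)
      have hng : ‖g‖ = 2 ^ k * ‖f‖ := by
        rw [hg, C0norm_smul, abs_of_pos (by positivity)]
      have hgbig : 1 ≤ ‖g‖ := by rw [hng]; exact h1
      have h3 := hbig g hPg hgbig
      rw [hng, hg, hhom k f hf] at h3
      have h2k : (0:ℝ) < 2 ^ k := by positivity
      exact le_of_mul_le_mul_left h3 h2k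
  -- conclusion
  intro f
  have hPp : ∀ x, 0 ≤ posPart f x := fun x => le_max_right _ _
  have hPn : ∀ x, 0 ≤ negPart f x := fun x => le_max_right _ _
  have hnp : ‖posPart f‖ ≤ ‖f‖ := by
    apply C0norm_le _ (norm_nonneg f)
    intro x
    have h1 : |posPart f x| ≤ |f x| := by
      rw [abs_of_nonneg (hPp x)]
      exact max_le (le_abs_self _) (abs_nonneg _)
    exact le_trans h1 (C0abs_le_norm f x)
  have hnn : ‖negPart f‖ ≤ ‖f‖ := by
    apply C0norm_le _ (norm_nonneg f)
    intro x
    have h1 : |negPart f x| ≤ |f x| := by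
      rw [abs_of_nonneg (hPn x)]
      apply max_le _ (abs_nonneg _)
      show (-f) x ≤ |f x|
      have h2 : (-f) x = -(f x) := by simp
      rw [h2]
      exact neg_le_abs _
    exact le_trans h1 (C0abs_le_norm f x)
  calc ‖tildeT T f‖ = ‖T (posPart f) - T (negPart f)‖ := rfl
  _ ≤ max ‖T (posPart f)‖ ‖T (negPart f)‖ :=
      C0norm_sub_le_max _ _ (hpos _ hPp) (hpos _ hPn)
  _ ≤ max ‖posPart f‖ ‖negPart f‖ :=
      max_le_max (hcone _ hPp) (hcone _ hPn)
  _ ≤ ‖f‖ := max_le hnp hnn
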